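/- Let 0 < q < 1, let ν be a nonnegative integer, and set c_j = 1/(q;q)_{ν+j}. Define the shift operator Ê by Ê c_j = c_{j+1} and D̂^k = (Ê-1)(Ê-q)···(Ê-q^{k-1}). Then D̂^k c_0 = q^{k(k+ν)}/(q;q)_{k+ν} for every nonnegative integer k. -/

import Mathlib

/-- The finite q-Pochhammer symbol `(a;q)_k`. -/
def qPoch (a q : ℝ) (k : ℕ) : ℝ := ∏ i ∈ Finset.range k, (1 - a * q ^ i)

/-- The operator `D̂^k = (Ê-1)(Ê-q)⋯(Ê-q^{k-1})` where `Ê` is the shift `(Ê c)_j = c_{j+1}`. -/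
def Dhat (q : ℝ) : ℕ → (ℕ → ℝ) → (ℕ → ℝ)
  | 0, c => c
  | k + 1, c => fun j => Dhat q k c (j + 1) - q ^ k * Dhat q k c j

lemma qPoch_pos {q : ℝ} (hq0 : 0 < q) (hq1 : q < 1) (n : ℕ) : 0 < qPoch q q n := by
  apply Finset.prod_pos
  intro i _
  have : q * q ^ i < 1 := by
    calc q * q ^ i ≤ q * 1 := by
          exact mul_le_mul_of_nonneg_left (pow_le_one₀ hq0.le hq1.le) hq0.le
      _ = q := mul_one q
      _ < 1 := hq1
  linarith

lemma qPoch_succ (q : ℝ) (n : ℕ) :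
    qPoch q q (n + 1) = qPoch q q n * (1 - q * q ^ n) := by
  simp [qPoch, Finset.prod_range_succ]

lemma Dhat_key (q : ℝ) (hq0 : 0 < q) (hq1 : q < 1) (ν : ℕ) (k : ℕ) : ∀ j : ℕ,
    Dhat q k (fun j => 1 / qPoch q q (ν + j)) j
      = q ^ (k * (k + ν + j)) / qPoch q q (k + ν + j) := by
  induction k with
  | zero => intro j; simp [Dhat, Nat.add_comm ν j]
  | succ k ih =>
    intro j
    have h1 := ih (j + 1)
    have h2 := ih j
    have hm : k + ν + (j + 1) = k + ν + j + 1 := by ring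
    have hP : qPoch q q (k + ν + j + 1) = qPoch q q (k + ν + j) * (1 - q * q ^ (k + ν + j)) :=
      qPoch_succ q _
    have hne : qPoch q q (k + ν + j) ≠ 0 := (qPoch_pos hq0 hq1 _).ne'
    have hne' : (1 - q * q ^ (k + ν + j)) ≠ 0 := by
      have := qPoch_pos hq0 hq1 (k + ν + j + 1)
      rw [hP] at this
      intro h
      rw [h, mul_zero] at this
      exact lt_irrefl 0 this
    show Dhat q k (fun j => 1 / qPoch q q (ν + j)) (j + 1)
        - q ^ k * Dhat q k (fun j => 1 / qPoch q q (ν + j)) j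
      = q ^ ((k + 1) * (k + 1 + ν + j)) / qPoch q q (k + 1 + ν + j)
    rw [h1, h2, hm, hP]
    have e1 : k * (k + ν + j + 1) = k * (k + ν + j) + k := by ring
    have e2 : (k + 1) * (k + 1 + ν + j) = k * (k + ν + j) + k + (k + ν + j) + 1 := by ring
    have e3 : k + 1 + ν + j = k + ν + j + 1 := by ring
    rw [e1, e2, e3, hP]
    field_simp
    ring

/-- For `c_j = 1/(q;q)_{ν+j}` one has `D̂^k c_0 = q^{k(k+ν)}/(q;q)_{k+ν}`. -/
theorem Dhat_qPochInv (q : ℝ) (hq0 : 0 < q) (hq1 : q < 1) (ν : ℕ) (k : ℕ) :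
    Dhat q k (fun j => 1 / qPoch q q (ν + j)) 0 = q ^ (k * (k + ν)) / qPoch q q (k + ν) := by
  simpa using Dhat_key q hq0 hq1 ν k 0
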